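/- The Hessian determinant of û₀(x₁,x₂) = Re((x₁+ix₂)^{3/2}) satisfies det D²û₀(x) = −(9/16)·(x₁²+x₂²)^{−1/2} at every point off the branch cut; in particular √(x₁²+x₂²)·det D²û₀(x) = −9/16. -/

import Mathlib

open Complex ContinuousLinearMap

noncomputable def Emap : (ℝ × ℝ) →L[ℝ] ℂ :=
  Complex.ofRealCLM.comp (ContinuousLinearMap.fst ℝ ℝ ℝ) +
    (ContinuousLinearMap.snd ℝ ℝ ℝ).smulRight Complex.I

lemma Emap_apply (v : ℝ × ℝ) : Emap v = (v.1 : ℂ) + v.2 * Complex.I := by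
  simp [Emap, Complex.real_smul]

lemma key {h : ℂ → ℂ} {c : ℂ} (p : ℝ × ℝ)
    (hd : HasDerivAt h c ((p.1 : ℂ) + p.2 * Complex.I)) :
    HasFDerivAt (fun q : ℝ × ℝ => (h ((q.1 : ℂ) + q.2 * Complex.I)).re)
      (Complex.reCLM.comp
        ((((1 : ℂ →L[ℂ] ℂ).smulRight c).restrictScalars ℝ).comp Emap)) p := by
  have heq : (fun q : ℝ × ℝ => (q.1 : ℂ) + q.2 * Complex.I) = ⇑Emap := by
    funext v; exact (Emap_apply v).symm
  have hE : HasFDerivAt (fun q : ℝ × ℝ => (q.1 : ℂ) + q.2 * Complex.I) Emap p := by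
    rw [heq]; exact Emap.hasFDerivAt
  exact (Complex.reCLM.hasFDerivAt.comp _
    ((hd.hasFDerivAt.restrictScalars ℝ).comp p hE))

lemma key_apply (c : ℂ) (v : ℝ × ℝ) :
    (Complex.reCLM.comp
        ((((1 : ℂ →L[ℂ] ℂ).smulRight c).restrictScalars ℝ).comp Emap)) v
      = (((v.1 : ℂ) + v.2 * Complex.I) * c).re := by
  simp [Emap_apply, smul_eq_mul]

/-- The model solution `û₀(x₁,x₂) = Re((x₁+ix₂)^{3/2})` (principal branch). -/
noncomputable def uhat : ℝ × ℝ → ℝ :=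
  fun p => (((p.1 : ℂ) + (p.2 : ℂ) * Complex.I) ^ ((3 : ℂ) / 2)).re

/-- The Hessian determinant of `û₀` equals `−(9/16)(x₁²+x₂²)^{−1/2}` off the
branch cut; in particular `√(x₁²+x₂²)·det D²û₀ = −9/16`. -/
theorem stmt3 (x : ℝ × ℝ) (hx : ¬ (x.2 = 0 ∧ x.1 ≤ 0))
    (d11 d12 d21 d22 : ℝ)
    (h11 : d11 = fderiv ℝ (fun y => fderiv ℝ uhat y (1, 0)) x (1, 0))
    (h12 : d12 = fderiv ℝ (fun y => fderiv ℝ uhat y (0, 1)) x (1, 0))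
    (h21 : d21 = fderiv ℝ (fun y => fderiv ℝ uhat y (1, 0)) x (0, 1))
    (h22 : d22 = fderiv ℝ (fun y => fderiv ℝ uhat y (0, 1)) x (0, 1)) :
    d11 * d22 - d12 * d21 = -(9 / 16) * (Real.sqrt (x.1 ^ 2 + x.2 ^ 2))⁻¹ ∧
      Real.sqrt (x.1 ^ 2 + x.2 ^ 2) * (d11 * d22 - d12 * d21) = -(9 / 16) := by
  set z : ℂ := (x.1 : ℂ) + x.2 * Complex.I with hz_def
  have hre : z.re = x.1 := by simp [hz_def]
  have him : z.im = x.2 := by simp [hz_def]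
  have hz : z ∈ Complex.slitPlane := by
    rw [Complex.mem_slitPlane_iff, hre, him]
    by_cases h2 : x.2 = 0
    · exact Or.inl (not_le.mp fun h => hx ⟨h2, h⟩)
    · exact Or.inr h2
  have hz0 : z ≠ 0 := Complex.slitPlane_ne_zero hz
  set S : Set (ℝ × ℝ) := {p | (p.1 : ℂ) + p.2 * Complex.I ∈ Complex.slitPlane} with hS_def
  have hScont : Continuous fun p : ℝ × ℝ => (p.1 : ℂ) + p.2 * Complex.I := by
    continuity
  have hSopen : IsOpen S := Complex.isOpen_slitPlane.preimage hScont
  have hxS : x ∈ S := hz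
  have hSnhds : S ∈ nhds x := hSopen.mem_nhds hxS
  -- first derivative of uhat on S
  have hfd : ∀ p ∈ S, HasFDerivAt uhat
      (Complex.reCLM.comp
        ((((1 : ℂ →L[ℂ] ℂ).smulRight
            ((3 : ℂ)/2 * ((p.1 : ℂ) + p.2 * Complex.I) ^ ((1 : ℂ)/2))).restrictScalars ℝ).comp
          Emap)) p := by
    intro p hp
    have hd : HasDerivAt (fun w : ℂ => w ^ ((3 : ℂ)/2))
        ((3 : ℂ)/2 * ((p.1 : ℂ) + p.2 * Complex.I) ^ ((1 : ℂ)/2))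
        ((p.1 : ℂ) + p.2 * Complex.I) := by
      have h := (Complex.hasStrictDerivAt_cpow_const (c := (3 : ℂ)/2) hp).hasDerivAt
      have hexp : (3 : ℂ)/2 - 1 = (1 : ℂ)/2 := by norm_num
      rw [hexp] at h
      exact h
    exact key p hd
  -- eventual formulas for the first partials
  have A1 : (fun y => fderiv ℝ uhat y (1, 0)) =ᶠ[nhds x]
      (fun y : ℝ × ℝ =>
        (((3 : ℂ)/2 * ((y.1 : ℂ) + y.2 * Complex.I) ^ ((1 : ℂ)/2))).re) := by
    filter_upwards [hSnhds] with y hy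
    rw [(hfd y hy).fderiv, key_apply]
    norm_num
  have A2 : (fun y => fderiv ℝ uhat y (0, 1)) =ᶠ[nhds x]
      (fun y : ℝ × ℝ =>
        ((Complex.I * ((3 : ℂ)/2 * ((y.1 : ℂ) + y.2 * Complex.I) ^ ((1 : ℂ)/2)))).re) := by
    filter_upwards [hSnhds] with y hy
    rw [(hfd y hy).fderiv, key_apply]
    norm_num [mul_comm]
  -- second derivative data
  set c₂ : ℂ := (3 : ℂ)/4 * z ^ (-(1 : ℂ)/2) with hc2_def
  have hd2 : HasDerivAt (fun w : ℂ => (3 : ℂ)/2 * w ^ ((1 : ℂ)/2)) c₂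
      ((x.1 : ℂ) + x.2 * Complex.I) := by
    have h := ((Complex.hasStrictDerivAt_cpow_const (c := (1 : ℂ)/2)
      hz).hasDerivAt).const_mul ((3 : ℂ)/2)
    have hexp : (1 : ℂ)/2 - 1 = -(1 : ℂ)/2 := by norm_num
    rw [hexp] at h
    rw [show c₂ = (3 : ℂ)/2 * ((1 : ℂ)/2 * z ^ (-(1 : ℂ)/2)) by rw [hc2_def]; ring]
    exact h
  have hd2' : HasDerivAt (fun w : ℂ => Complex.I * ((3 : ℂ)/2 * w ^ ((1 : ℂ)/2)))
      (Complex.I * c₂) ((x.1 : ℂ) + x.2 * Complex.I) := hd2.const_mul Complex.I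
  have D1 := key x hd2
  have D2 := key x hd2'
  -- compute the four second partials
  have e11 : d11 = c₂.re := by
    rw [h11, A1.fderiv_eq, D1.fderiv, key_apply]
    norm_num
  have e21 : d21 = (Complex.I * c₂).re := by
    rw [h21, A1.fderiv_eq, D1.fderiv, key_apply]
    norm_num [mul_comm]
  have e12 : d12 = (Complex.I * c₂).re := by
    rw [h12, A2.fderiv_eq, D2.fderiv, key_apply]
    norm_num
  have e22 : d22 = (Complex.I * (Complex.I * c₂)).re := by
    rw [h22, A2.fderiv_eq, D2.fderiv, key_apply]
    norm_num [mul_comm]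
  -- the determinant
  have hdet : d11 * d22 - d12 * d21 = -Complex.normSq c₂ := by
    rw [e11, e12, e21, e22]
    simp [Complex.mul_re, Complex.mul_im, Complex.normSq_apply]
    ring
  -- |z| and normSq computations
  have habs : Real.sqrt (x.1 ^ 2 + x.2 ^ 2) = ‖z‖ := by
    rw [Complex.norm_def, hz_def, Complex.normSq_add_mul_I]
  have habs_pos : 0 < ‖z‖ := norm_pos_iff.mpr hz0
  have hns : Complex.normSq c₂ = 9/16 * ‖z‖⁻¹ := by
    rw [Complex.normSq_eq_norm_sq, hc2_def, norm_mul]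
    have hcast : (-(1 : ℂ)/2) = ((-(1/2) : ℝ) : ℂ) := by push_cast; ring
    rw [hcast, Complex.norm_cpow_real]
    have : (‖z‖ ^ (-(1/2) : ℝ)) ^ 2 = ‖z‖⁻¹ := by
      rw [← Real.rpow_natCast (‖z‖ ^ (-(1/2) : ℝ)) 2,
        ← Real.rpow_mul (norm_nonneg z)]
      norm_num [Real.rpow_neg_one]
    rw [mul_pow, this]
    norm_num
  constructor
  · rw [hdet, hns, habs]; ring
  · rw [hdet, hns, habs]
    field_simp
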